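/- Let f and g be two smooth functions on ℝ and let n ≥ 1 be an integer. Then for all t ∈ ℝ, D^n(t^n f(t) g(t)) = Σ_{j=0}^{n} (n choose j) D^j(t^j f(t)) · D^{n−j}(t^{n−j} g(t)) − n Σ_{j=0}^{n−1} (n−1 choose j) D^j(t^j f(t)) · D^{n−1−j}(t^{n−1−j} g(t)), where D = d/dt. -/

import Mathlib

open Real Finset

private noncomputable def MLA (f : ℝ → ℝ) (j : ℕ) : ℝ → ℝ := iteratedDeriv j (fun s => s^j * f s)

private lemma MLA_smooth {f : ℝ → ℝ} (hf : ContDiff ℝ (⊤:ℕ∞) f) (j : ℕ) :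
    ContDiff ℝ (⊤:ℕ∞) (MLA f j) := by
  unfold MLA
  rw [iteratedDeriv_eq_iterate]
  exact ((contDiff_id.pow j).mul hf).iterate_deriv j

private lemma MLA_diff {f : ℝ → ℝ} (hf : ContDiff ℝ (⊤:ℕ∞) f) (j : ℕ) (t : ℝ) :
    DifferentiableAt ℝ (MLA f j) t :=
  ((MLA_smooth hf j).differentiable (by simp)).differentiableAt

private lemma key1 {h : ℝ → ℝ} (hh : ContDiff ℝ (⊤:ℕ∞) h) (m : ℕ) (t : ℝ) :
    iteratedDeriv (m+1) (fun s => s * h s) t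
      = t * iteratedDeriv (m+1) h t + (m+1) * iteratedDeriv m h t := by
  have hD : ∀ k, Differentiable ℝ (iteratedDeriv k h) := fun k => by
    rw [iteratedDeriv_eq_iterate]; exact (hh.iterate_deriv k).differentiable (by simp)
  induction m generalizing t with
  | zero =>
      simp only [zero_add, iteratedDeriv_one, iteratedDeriv_zero, Nat.cast_zero]
      rw [deriv_fun_mul differentiableAt_fun_id ((hh.differentiable (by simp)).differentiableAt)]
      simp only [deriv_id'']
      ring
  | succ m ih =>
      rw [iteratedDeriv_succ]
      have hcong : deriv (iteratedDeriv (m+1) (fun s => s * h s)) t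
          = deriv (fun u => u * iteratedDeriv (m+1) h u + ((m:ℝ)+1) * iteratedDeriv m h u) t := by
        congr 1; funext u; rw [ih u]
      rw [hcong]
      rw [deriv_fun_add (differentiableAt_fun_id.fun_mul ((hD (m+1)) t)) (((hD m) t).const_mul _),
        deriv_fun_mul differentiableAt_fun_id ((hD (m+1)) t), deriv_const_mul _ ((hD m) t)]
      have hs1 : deriv (iteratedDeriv m h) t = iteratedDeriv (m+1) h t :=
        congrFun (iteratedDeriv_succ).symm t
      have hs2 : deriv (iteratedDeriv (m+1) h) t = iteratedDeriv (m+2) h t :=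
        congrFun (iteratedDeriv_succ).symm t
      rw [hs1, hs2]
      simp only [deriv_id'']
      push_cast; ring

private lemma MLA_succ {f : ℝ → ℝ} (hf : ContDiff ℝ (⊤:ℕ∞) f) (j : ℕ) (t : ℝ) :
    MLA f (j+1) t = t * deriv (MLA f j) t + ((j:ℝ)+1) * MLA f j t := by
  have h1 : (fun s : ℝ => s^(j+1) * f s) = (fun s => s * (s^j * f s)) := by
    funext s; ring
  unfold MLA
  rw [h1, key1 (h := fun s => s^j * f s) ((contDiff_id.pow j).mul hf) j t, iteratedDeriv_succ]

private lemma pascal_sum (a b : ℕ → ℝ) (n : ℕ) :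
    ∑ j ∈ range (n+1), (n.choose j : ℝ) * (a (j+1) * b (n-j) + a j * b (n+1-j))
      = ∑ j ∈ range (n+2), ((n+1).choose j : ℝ) * (a j * b (n+1-j)) := by
  have hR : ∑ j ∈ range (n+2), ((n+1).choose j : ℝ) * (a j * b (n+1-j))
      = (∑ j ∈ range (n+1), ((n.choose j : ℝ) + (n.choose (j+1) : ℝ)) * (a (j+1) * b (n-j)))
        + a 0 * b (n+1) := by
    rw [Finset.sum_range_succ']
    congr 1
    · refine Finset.sum_congr rfl fun j hj => ?_
      have h2 : n + 1 - (j+1) = n - j := by omega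
      rw [h2, Nat.choose_succ_succ]
      push_cast; ring
    · simp
  have hL2 : ∑ j ∈ range (n+1), (n.choose j : ℝ) * (a j * b (n+1-j))
      = (∑ j ∈ range n, (n.choose (j+1) : ℝ) * (a (j+1) * b (n-j))) + a 0 * b (n+1) := by
    rw [Finset.sum_range_succ']
    congr 1
    · refine Finset.sum_congr rfl fun j hj => ?_
      have h2 : n + 1 - (j+1) = n - j := by omega
      rw [h2]
    · simp
  have hL3 : ∑ j ∈ range (n+1), (n.choose (j+1) : ℝ) * (a (j+1) * b (n-j))
      = ∑ j ∈ range n, (n.choose (j+1) : ℝ) * (a (j+1) * b (n-j)) := by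
    rw [Finset.sum_range_succ, Nat.choose_succ_self]
    simp
  calc ∑ j ∈ range (n+1), (n.choose j : ℝ) * (a (j+1) * b (n-j) + a j * b (n+1-j))
      = (∑ j ∈ range (n+1), (n.choose j : ℝ) * (a (j+1) * b (n-j)))
        + ∑ j ∈ range (n+1), (n.choose j : ℝ) * (a j * b (n+1-j)) := by
        rw [← Finset.sum_add_distrib]; exact Finset.sum_congr rfl fun j _ => by ring
    _ = (∑ j ∈ range (n+1), (n.choose j : ℝ) * (a (j+1) * b (n-j)))
        + ((∑ j ∈ range (n+1), (n.choose (j+1) : ℝ) * (a (j+1) * b (n-j))) + a 0 * b (n+1)) := by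
        rw [hL2, hL3]
    _ = ∑ j ∈ range (n+2), ((n+1).choose j : ℝ) * (a j * b (n+1-j)) := by
        rw [hR, ← add_assoc, ← Finset.sum_add_distrib]
        congr 1
        exact Finset.sum_congr rfl fun j _ => by ring

private lemma tU_eq (a b a' b' : ℕ → ℝ) (t : ℝ)
    (ha : ∀ j, a (j+1) = t * a' j + ((j:ℝ)+1) * a j)
    (hb : ∀ k, b (k+1) = t * b' k + ((k:ℝ)+1) * b k) (n : ℕ) :
    t * ∑ j ∈ range (n+1), (n.choose j : ℝ) * (a' j * b (n-j) + a j * b' (n-j))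
      = (∑ j ∈ range (n+2), ((n+1).choose j : ℝ) * (a j * b (n+1-j)))
        - ((n:ℝ)+2) * ∑ j ∈ range (n+1), (n.choose j : ℝ) * (a j * b (n-j)) := by
  have h1 : ∀ j k : ℕ, t * (a' j * b k + a j * b' k)
      = a (j+1) * b k + a j * b (k+1) - ((j:ℝ) + (k:ℝ) + 2) * (a j * b k) := by
    intro j k
    have hA : t * a' j = a (j+1) - ((j:ℝ)+1) * a j := by linarith [ha j]
    have hB : t * b' k = b (k+1) - ((k:ℝ)+1) * b k := by linarith [hb k]
    calc t * (a' j * b k + a j * b' k) = (t * a' j) * b k + a j * (t * b' k) := by ring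
      _ = _ := by rw [hA, hB]; ring
  have key : t * ∑ j ∈ range (n+1), (n.choose j : ℝ) * (a' j * b (n-j) + a j * b' (n-j))
      = ∑ j ∈ range (n+1), ((n.choose j : ℝ) * (a (j+1) * b (n-j) + a j * b (n+1-j))
          - ((n:ℝ)+2) * ((n.choose j : ℝ) * (a j * b (n-j)))) := by
    rw [Finset.mul_sum]
    refine Finset.sum_congr rfl fun j hj => ?_
    have hj' : j ≤ n := Nat.lt_succ_iff.mp (Finset.mem_range.mp hj)
    have h2 : n + 1 - j = (n - j) + 1 := by omega
    rw [h2]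
    have h4 : t * ((n.choose j : ℝ) * (a' j * b (n-j) + a j * b' (n-j)))
        = (n.choose j : ℝ) * (t * (a' j * b (n-j) + a j * b' (n-j))) := by ring
    rw [h4, h1 j (n-j)]
    have h3 : ((n - j : ℕ):ℝ) = (n:ℝ) - (j:ℝ) := by
      rw [Nat.cast_sub hj']
    rw [h3]; ring
  rw [key, Finset.sum_sub_distrib, pascal_sum a b n, ← Finset.mul_sum]

private lemma algebra_step (a b a' b' : ℕ → ℝ) (t : ℝ)
    (ha : ∀ j, a (j+1) = t * a' j + ((j:ℝ)+1) * a j)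
    (hb : ∀ k, b (k+1) = t * b' k + ((k:ℝ)+1) * b k) (n : ℕ) :
    t * ((∑ j ∈ range (n+1), (n.choose j : ℝ) * (a' j * b (n-j) + a j * b' (n-j)))
         - (n:ℝ) * ∑ j ∈ range n, ((n-1).choose j : ℝ) * (a' j * b (n-1-j) + a j * b' (n-1-j)))
    + ((n:ℝ)+1) * ((∑ j ∈ range (n+1), (n.choose j : ℝ) * (a j * b (n-j)))
         - (n:ℝ) * ∑ j ∈ range n, ((n-1).choose j : ℝ) * (a j * b (n-1-j)))
    = (∑ j ∈ range (n+2), ((n+1).choose j : ℝ) * (a j * b (n+1-j)))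
      - ((n:ℝ)+1) * ∑ j ∈ range (n+1), (n.choose j : ℝ) * (a j * b (n-j)) := by
  have e1 := tU_eq a b a' b' t ha hb n
  have e2 : (n:ℝ) * (t * ∑ j ∈ range n, ((n-1).choose j : ℝ) * (a' j * b (n-1-j) + a j * b' (n-1-j)))
      = (n:ℝ) * ((∑ j ∈ range (n+1), (n.choose j : ℝ) * (a j * b (n-j)))
          - ((n:ℝ)+1) * ∑ j ∈ range n, ((n-1).choose j : ℝ) * (a j * b (n-1-j))) := by
    cases n with
    | zero => simp
    | succ m =>
        have e3 := tU_eq a b a' b' t ha hb m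
        simp only [Nat.add_sub_cancel]
        rw [e3]
        push_cast; ring
  linear_combination e1 - e2

private lemma main_aux (f g : ℝ → ℝ) (hf : ContDiff ℝ (⊤:ℕ∞) f)
    (hg : ContDiff ℝ (⊤:ℕ∞) g) (n : ℕ) :
    ∀ t : ℝ, MLA (fun s => f s * g s) n t =
      (∑ j ∈ range (n+1), (n.choose j : ℝ) * (MLA f j t * MLA g (n-j) t))
      - (n:ℝ) * ∑ j ∈ range n, ((n-1).choose j : ℝ) * (MLA f j t * MLA g (n-1-j) t) := by
  have hfg : ContDiff ℝ (⊤:ℕ∞) (fun s => f s * g s) := hf.mul hg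
  induction n with
  | zero => intro t; simp [MLA]
  | succ n ih =>
    intro t
    rw [MLA_succ hfg n t]
    have hfun : MLA (fun s => f s * g s) n = fun u =>
        (∑ j ∈ range (n+1), (n.choose j : ℝ) * (MLA f j u * MLA g (n-j) u))
        - (n:ℝ) * ∑ j ∈ range n, ((n-1).choose j : ℝ) * (MLA f j u * MLA g (n-1-j) u) :=
      funext ih
    rw [hfun]
    have hdF : DifferentiableAt ℝ
        (fun u => ∑ j ∈ range (n+1), (n.choose j : ℝ) * (MLA f j u * MLA g (n-j) u)) t :=
      DifferentiableAt.fun_sum fun j _ => ((MLA_diff hf j t).mul (MLA_diff hg _ t)).const_mul _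
    have hdT : DifferentiableAt ℝ
        (fun u => ∑ j ∈ range n, ((n-1).choose j : ℝ) * (MLA f j u * MLA g (n-1-j) u)) t :=
      DifferentiableAt.fun_sum fun j _ => ((MLA_diff hf j t).mul (MLA_diff hg _ t)).const_mul _
    have hder : deriv (fun u =>
        (∑ j ∈ range (n+1), (n.choose j : ℝ) * (MLA f j u * MLA g (n-j) u))
        - (n:ℝ) * ∑ j ∈ range n, ((n-1).choose j : ℝ) * (MLA f j u * MLA g (n-1-j) u)) t
      = (∑ j ∈ range (n+1), (n.choose j : ℝ) *
            (deriv (MLA f j) t * MLA g (n-j) t + MLA f j t * deriv (MLA g (n-j)) t))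
        - (n:ℝ) * ∑ j ∈ range n, ((n-1).choose j : ℝ) *
            (deriv (MLA f j) t * MLA g (n-1-j) t + MLA f j t * deriv (MLA g (n-1-j)) t) := by
      rw [deriv_fun_sub hdF (hdT.const_mul _), deriv_const_mul _ hdT, deriv_fun_sum, deriv_fun_sum]
      · congr 1
        · refine Finset.sum_congr rfl fun j _ => ?_
          rw [deriv_const_mul _ ((MLA_diff hf j t).fun_mul (MLA_diff hg _ t)),
            deriv_fun_mul (MLA_diff hf j t) (MLA_diff hg _ t)]
        · congr 1
          refine Finset.sum_congr rfl fun j _ => ?_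
          rw [deriv_const_mul _ ((MLA_diff hf j t).fun_mul (MLA_diff hg _ t)),
            deriv_fun_mul (MLA_diff hf j t) (MLA_diff hg _ t)]
      · exact fun j _ => ((MLA_diff hf j t).mul (MLA_diff hg _ t)).const_mul _
      · exact fun j _ => ((MLA_diff hf j t).mul (MLA_diff hg _ t)).const_mul _
    rw [hder]
    have hstep := algebra_step (fun j => MLA f j t) (fun k => MLA g k t)
      (fun j => deriv (MLA f j) t) (fun k => deriv (MLA g k) t) t
      (fun j => MLA_succ hf j t) (fun k => MLA_succ hg k t) n
    simp only [Nat.add_sub_cancel]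
    push_cast
    linear_combination hstep

theorem modified_leibniz (f g : ℝ → ℝ) (hf : ContDiff ℝ (⊤ : ℕ∞) f)
    (hg : ContDiff ℝ (⊤ : ℕ∞) g) (n : ℕ) (hn : 1 ≤ n) (t : ℝ) :
    iteratedDeriv n (fun s => s^n * f s * g s) t =
      (∑ j ∈ Finset.range (n+1), (n.choose j : ℝ) *
        (iteratedDeriv j (fun s => s^j * f s) t *
          iteratedDeriv (n-j) (fun s => s^(n-j) * g s) t))
      - (n:ℝ) * ∑ j ∈ Finset.range n, ((n-1).choose j : ℝ) *
        (iteratedDeriv j (fun s => s^j * f s) t *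
          iteratedDeriv (n-1-j) (fun s => s^(n-1-j) * g s) t) := by
  have h : (fun s : ℝ => s^n * f s * g s) = (fun s => s^n * (f s * g s)) := by
    funext s; ring
  have := main_aux f g hf hg n t
  unfold MLA at this
  rw [h]
  exact this
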